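/- arXiv:math/0403132 — 5 statements merged into one kernel-verified Lean document; each statement's English description precedes it below -/
import Mathlib

section
/- Let n ≥ 1, k ≥ 0 and d ≥ k+2 be integers and let F ∈ R_k. If g ∈ R_{k+2} lies in W(x_0,F;k+2)^⊥ (the perpendicular inside R_{k+2} of W(x_0,F;k+2) = x_0^2·R_k + x_0·F·R_1), then for every h ∈ R_{d-k-2} the product h·g lies in W(x_0,F;d)^⊥ ⊆ R_d. In other words, R_{d-k-2}·(W(x_0,F;k+2)^⊥) ⊆ W(x_0,F;d)^⊥. -/
open MvPolynomial

/-- `G·V`, the image of the subspace `V` under multiplication by `G`. -/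
noncomputable def mulSub {K : Type*} [Field K] {σ : Type*} (G : MvPolynomial σ K)
    (V : Submodule K (MvPolynomial σ K)) : Submodule K (MvPolynomial σ K) :=
  V.map (LinearMap.mulLeft K G)

/-- `W(L,F;d) = L^{d-k}·R_k + L^{d-k-1}·F·R_1`, the affine cone over the tangent space
to the k-th osculating variety of the d-uple Veronese at the point `L^{d-k}F`. -/
noncomputable def Wspace {K : Type*} [Field K] {σ : Type*} (k d : ℕ)
    (L F : MvPolynomial σ K) : Submodule K (MvPolynomial σ K) :=
  mulSub (L ^ (d - k)) (homogeneousSubmodule σ K k) ⊔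
    mulSub (L ^ (d - k - 1) * F) (homogeneousSubmodule σ K 1)

/-- the apolarity pairing `φ(f,g) = Σ_I f_I g_I`. -/
noncomputable def apol {K : Type*} [Field K] {σ : Type*} (f g : MvPolynomial σ K) : K :=
  ∑ I ∈ f.support, f.coeff I * g.coeff I

/-- the perpendicular of a set of forms, inside `R_d`, w.r.t. the apolarity pairing -/
def perpSet {K : Type*} [Field K] {σ : Type*} (d : ℕ) (V : Set (MvPolynomial σ K)) :
    Set (MvPolynomial σ K) :=
  {f | f ∈ homogeneousSubmodule σ K d ∧ ∀ v ∈ V, apol f v = 0}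

set_option linter.unusedSectionVars false

section Aux

variable {K : Type*} [Field K] {σ : Type*} [DecidableEq σ]

lemma apol_eq_sum_subset {f g : MvPolynomial σ K} {s : Finset (σ →₀ ℕ)}
    (hs : f.support ⊆ s) : apol f g = ∑ I ∈ s, f.coeff I * g.coeff I :=
  Finset.sum_subset hs (fun I _ hI => by
    rw [MvPolynomial.notMem_support_iff.mp hI, zero_mul])

lemma apol_zero_left (g : MvPolynomial σ K) : apol 0 g = 0 := by simp [apol]

lemma apol_add_left (a b g : MvPolynomial σ K) :
    apol (a + b) g = apol a g + apol b g := by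
  rw [apol_eq_sum_subset (s := a.support ∪ b.support) MvPolynomial.support_add,
    apol_eq_sum_subset (s := a.support ∪ b.support) Finset.subset_union_left,
    apol_eq_sum_subset (s := a.support ∪ b.support) Finset.subset_union_right,
    ← Finset.sum_add_distrib]
  exact Finset.sum_congr rfl fun I _ => by rw [coeff_add, add_mul]

lemma apol_add_right (f a b : MvPolynomial σ K) :
    apol f (a + b) = apol f a + apol f b := by
  unfold apol
  rw [← Finset.sum_add_distrib]
  exact Finset.sum_congr rfl fun I _ => by rw [coeff_add, mul_add]

lemma apol_sum_left {ι : Type*} (s : Finset ι) (f : ι → MvPolynomial σ K)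
    (q : MvPolynomial σ K) : apol (∑ i ∈ s, f i) q = ∑ i ∈ s, apol (f i) q := by
  induction s using Finset.cons_induction with
  | empty => simp [apol_zero_left]
  | cons i s hi ih => simp [Finset.sum_cons, apol_add_left, ih]

lemma apol_monomial_left (J : σ →₀ ℕ) (c : K) (g : MvPolynomial σ K) :
    apol (monomial J c) g = c * g.coeff J := by
  classical
  have hsub : (monomial J c).support ⊆ {J} := by
    rw [support_monomial]; split <;> simp
  rw [apol_eq_sum_subset hsub, Finset.sum_singleton, coeff_monomial, if_pos rfl]

lemma apol_monomial_right (f : MvPolynomial σ K) (M : σ →₀ ℕ) :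
    apol f (monomial M (1 : K)) = f.coeff M := by
  unfold apol
  rw [Finset.sum_congr rfl (fun I _ => by rw [coeff_monomial])]
  simp only [mul_ite, mul_one, mul_zero]
  rw [Finset.sum_ite_eq]
  split
  · rfl
  · exact (MvPolynomial.notMem_support_iff.mp (by assumption)).symm

lemma apol_mul_left (h g q : MvPolynomial σ K) :
    apol (h * g) q
      = ∑ J ∈ h.support, ∑ M ∈ g.support, h.coeff J * (g.coeff M * q.coeff (J + M)) := by
  conv_lhs => rw [h.as_sum, g.as_sum, Finset.sum_mul_sum]
  rw [apol_sum_left]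
  refine Finset.sum_congr rfl fun J _ => ?_
  rw [apol_sum_left]
  refine Finset.sum_congr rfl fun M _ => ?_
  rw [monomial_mul, apol_monomial_left, mul_assoc]

lemma coeff_X_pow_mul_eq_zero (s : σ) (t : ℕ) (r : MvPolynomial σ K) {I : σ →₀ ℕ}
    (hI : I s < t) : MvPolynomial.coeff I (X s ^ t * r) = 0 := by
  rw [X_pow_eq_monomial, coeff_mul]
  refine Finset.sum_eq_zero fun p hp => ?_
  have hab : p.1 + p.2 = I := Finset.HasAntidiagonal.mem_antidiagonal.mp hp
  rw [coeff_monomial]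
  split
  · exfalso
    have h1 : p.1 s = t := by rw [← ‹Finsupp.single s t = p.1›, Finsupp.single_eq_same]
    have h2 : p.1 s + p.2 s = I s := by rw [← hab]; rfl
    omega
  · rw [zero_mul]

lemma Finsupp.degree_add' (a b : σ →₀ ℕ) : (a + b).degree = a.degree + b.degree := by
  simp [Finsupp.degree_eq_weight_one, map_add]

lemma Finsupp.degree_single' (s : σ) (c : ℕ) : (Finsupp.single s c).degree = c := by
  rcases eq_or_ne c 0 with rfl | hc
  · simp [Finsupp.degree]
  · rw [Finsupp.degree_apply, Finsupp.support_single_ne_zero _ hc, Finset.sum_singleton,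
      Finsupp.single_eq_same]

lemma Finsupp.degree_eq_sum_univ [Fintype σ] (f : σ →₀ ℕ) :
    f.degree = ∑ i, f i := by
  rw [Finsupp.degree]
  exact Finset.sum_subset (Finset.subset_univ _)
    (fun i _ hi => Finsupp.notMem_support_iff.mp hi)

lemma eq_single_of_degree {n : ℕ} {J : Fin (n+1) →₀ ℕ} {m : ℕ}
    (hdeg : J.degree = m) (h0 : J 0 = m) : J = Finsupp.single 0 m := by
  have hsum : ∑ i, J i = m := by rw [← Finsupp.degree_eq_sum_univ, hdeg]
  have h0mem : (0 : Fin (n+1)) ∈ Finset.univ := Finset.mem_univ _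
  have := Finset.sum_erase_add Finset.univ J h0mem
  have hz : ∑ i ∈ Finset.univ.erase 0, J i = 0 := by omega
  ext i
  by_cases hi : i = 0
  · subst hi; rw [h0, Finsupp.single_eq_same]
  · rw [Finsupp.single_eq_of_ne' (Ne.symm hi)]
    exact Finset.sum_eq_zero_iff.mp hz i (Finset.mem_erase.mpr ⟨hi, Finset.mem_univ _⟩)

end Aux

/-- for `d ≥ k+2`, multiplying an element of `W(x_0,F;k+2)^⊥ ⊆ R_{k+2}` by any
form of degree `d-k-2` gives an element of `W(x_0,F;d)^⊥ ⊆ R_d`. -/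
theorem stmt4 {K : Type*} [Field K] [CharZero K] (n k d : ℕ) (hn : 1 ≤ n) (hd : k + 2 ≤ d)
    (F : MvPolynomial (Fin (n+1)) K) (hF : F ∈ homogeneousSubmodule (Fin (n+1)) K k)
    (g : MvPolynomial (Fin (n+1)) K)
    (hg : g ∈ perpSet (k + 2) ((Wspace k (k + 2) (X 0) F :
      Submodule K (MvPolynomial (Fin (n+1)) K)) : Set (MvPolynomial (Fin (n+1)) K)))
    (h : MvPolynomial (Fin (n+1)) K)
    (hh : h ∈ homogeneousSubmodule (Fin (n+1)) K (d - k - 2)) :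
    h * g ∈ perpSet d ((Wspace k d (X 0) F :
      Submodule K (MvPolynomial (Fin (n+1)) K)) : Set (MvPolynomial (Fin (n+1)) K)) := by
  obtain ⟨hgh, hgperp⟩ := hg
  rw [mem_homogeneousSubmodule] at hgh hh hF
  set m := d - k - 2 with hm
  have hdk : d - k = m + 2 := by omega
  have hdk1 : d - k - 1 = m + 1 := by omega
  -- g has no monomial with x_0-exponent ≥ 2
  have gvanish : ∀ M : Fin (n+1) →₀ ℕ, 2 ≤ M 0 → g.coeff M = 0 := by
    intro M hM
    by_cases hdeg : M.degree = k + 2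
    · set M' := M - Finsupp.single (0 : Fin (n+1)) 2 with hM'
      have hMeq : Finsupp.single (0 : Fin (n+1)) 2 + M' = M := by
        ext i
        by_cases hi : i = 0
        · subst hi
          simp only [Finsupp.add_apply, Finsupp.tsub_apply, Finsupp.single_eq_same, hM']
          omega
        · simp only [Finsupp.add_apply, Finsupp.tsub_apply, hM',
            Finsupp.single_eq_of_ne' (Ne.symm hi)]
          omega
      have hM'deg : M'.degree = k := by
        have := Finsupp.degree_add' (Finsupp.single (0 : Fin (n+1)) 2) M'
        rw [hMeq, hdeg, Finsupp.degree_single'] at this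
        omega
      have hmem : (X (0 : Fin (n+1)) : MvPolynomial (Fin (n+1)) K) ^ (k + 2 - k) *
          monomial M' 1 ∈ Wspace k (k+2) (X 0) F := by
        apply Submodule.mem_sup_left
        exact Submodule.mem_map_of_mem ((mem_homogeneousSubmodule _ _).mpr
          (isHomogeneous_monomial _ hM'deg))
      have hval := hgperp _ hmem
      have hk2 : k + 2 - k = 2 := by omega
      rw [hk2] at hval
      rw [X_pow_eq_monomial, monomial_mul, mul_one, hMeq, apol_monomial_right] at hval
      exact hval
    · exact hgh.coeff_eq_zero hdeg
  have hcoeff : ∀ J ∈ h.support, J.degree = m := by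
    intro J hJ
    by_contra hc
    exact MvPolynomial.mem_support_iff.mp hJ (hh.coeff_eq_zero hc)
  constructor
  · rw [mem_homogeneousSubmodule]
    have := hh.mul hgh
    have he : m + (k + 2) = d := by omega
    rwa [he] at this
  · intro v hv
    obtain ⟨y, hy, z, hz, rfl⟩ := Submodule.mem_sup.mp hv
    rw [apol_add_right]
    have hy0 : apol (h * g) y = 0 := by
      obtain ⟨p, hp, rfl⟩ := Submodule.mem_map.mp hy
      rw [LinearMap.mulLeft_apply, apol_mul_left]
      refine Finset.sum_eq_zero fun J hJ => Finset.sum_eq_zero fun M hM => ?_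
      by_cases hgM : g.coeff M = 0
      · rw [hgM, zero_mul, mul_zero]
      · have hM0 : M 0 ≤ 1 := by
          by_contra hc; exact hgM (gvanish M (by omega))
        have hJ0 : J 0 ≤ m := (hcoeff J hJ) ▸ Finsupp.le_degree 0 J
        have : (J + M) 0 < d - k := by
          have : (J + M) 0 = J 0 + M 0 := rfl
          omega
        rw [coeff_X_pow_mul_eq_zero 0 (d - k) p this, mul_zero, mul_zero]
    have hz0 : apol (h * g) z = 0 := by
      obtain ⟨l, hl, rfl⟩ := Submodule.mem_map.mp hz
      rw [LinearMap.mulLeft_apply, apol_mul_left]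
      refine Finset.sum_eq_zero fun J hJ => ?_
      by_cases hJeq : J = Finsupp.single 0 m
      · subst hJeq
        have hrw : (X (0:Fin (n+1)) : MvPolynomial (Fin (n+1)) K) ^ (d - k - 1) * F * l
            = monomial (Finsupp.single (0 : Fin (n+1)) m) 1 * (X 0 * F * l) := by
          rw [hdk1, ← X_pow_eq_monomial]
          ring
        have hcoeffs : ∀ M : Fin (n+1) →₀ ℕ,
            MvPolynomial.coeff (Finsupp.single (0:Fin (n+1)) m + M)
              ((X (0:Fin (n+1)) : MvPolynomial (Fin (n+1)) K) ^ (d - k - 1) * F * l)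
            = MvPolynomial.coeff M ((X (0:Fin (n+1)) : MvPolynomial (Fin (n+1)) K) * F * l) := by
          intro M
          rw [hrw, coeff_monomial_mul, one_mul]
        rw [Finset.sum_congr rfl (fun M _ => by rw [hcoeffs M]), ← Finset.mul_sum]
        have hmem : (X (0:Fin (n+1)) : MvPolynomial (Fin (n+1)) K) * F * l
            ∈ Wspace k (k+2) (X 0) F := by
          apply Submodule.mem_sup_right
          have hk1 : k + 2 - k - 1 = 1 := by omega
          have : (X (0:Fin (n+1)) : MvPolynomial (Fin (n+1)) K) ^ (k + 2 - k - 1) * F = X 0 * F := by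
            rw [hk1, pow_one]
          rw [← this]
          exact Submodule.mem_map_of_mem hl
        have := hgperp _ hmem
        rw [apol] at this
        rw [this, mul_zero]
      · refine Finset.sum_eq_zero fun M hM => ?_
        by_cases hgM : g.coeff M = 0
        · rw [hgM, zero_mul, mul_zero]
        · have hM0 : M 0 ≤ 1 := by
            by_contra hc; exact hgM (gvanish M (by omega))
          have hJdeg := hcoeff J hJ
          have hJ0le : J 0 ≤ m := hJdeg ▸ Finsupp.le_degree 0 J
          have hJ0 : J 0 < m := by
            rcases Nat.lt_or_ge (J 0) m with h' | h'
            · exact h'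
            · exact absurd (eq_single_of_degree hJdeg (by omega)) hJeq
          have hlt : (J + M) 0 < d - k - 1 := by
            have : (J + M) 0 = J 0 + M 0 := rfl
            omega
          rw [mul_assoc, coeff_X_pow_mul_eq_zero 0 (d - k - 1) (F * l) hlt,
            mul_zero, mul_zero]
    rw [hy0, hz0, add_zero]
end

section
/- Let n ≥ 1 and k ≥ 0 be integers and let d = k+1. Then there exist forms F_1,…,F_n ∈ R_k such that x_0·R_k + F_1·R_1 + x_1·R_k + F_2·R_1 + ⋯ + x_{n-1}·R_k + F_n·R_1 = R_{k+1}; i.e. the sum of the n subspaces W(x_{i-1},F_i;k+1), i = 1,…,n, is all of R_{k+1}. (Hence the n-th secant variety of the (d−1)-th osculating variety of the d-uple Veronese fills its ambient projective space.) -/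
open MvPolynomial

lemma myDegree_single {σ : Type*} (a : σ) (b : ℕ) :
    (Finsupp.single a b).degree = b := by
  show (Finsupp.single a b).sum (fun _ e => e) = b
  exact Finsupp.sum_single_index rfl

lemma myDegree_add {σ : Type*} (f g : σ →₀ ℕ) :
    (f + g).degree = f.degree + g.degree := by
  show (f + g).sum (fun _ e => e) = f.sum (fun _ e => e) + g.sum (fun _ e => e)
  exact Finsupp.sum_add_index' (fun _ => rfl) (fun _ _ _ => rfl)

/-- for `d = k+1` there are forms `F_1,…,F_n ∈ R_k` with
`W(x_0,F_1;k+1) + ⋯ + W(x_{n-1},F_n;k+1) = R_{k+1}`, i.e. the n-th secant variety of the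
(d−1)-th osculating variety of the d-uple Veronese fills its ambient space. -/
theorem stmt6 {K : Type*} [Field K] [CharZero K] (n k : ℕ) (hn : 1 ≤ n) :
    ∃ F : Fin n → MvPolynomial (Fin (n+1)) K,
      (∀ i, F i ∈ homogeneousSubmodule (Fin (n+1)) K k) ∧
      (⨆ i : Fin n, Wspace k (k + 1) (X (Fin.castSucc i)) (F i)) =
        homogeneousSubmodule (Fin (n+1)) K (k + 1) := by
  classical
  have h1 : k + 1 - k = 1 := by omega
  have h0 : k + 1 - k - 1 = 0 := by omega
  refine ⟨fun _ => X (Fin.last n) ^ k, fun i => ?_, ?_⟩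
  · rw [mem_homogeneousSubmodule]
    simpa using (isHomogeneous_X K (Fin.last n)).pow k
  · apply le_antisymm
    · apply iSup_le
      intro i
      unfold Wspace mulSub
      rw [h0, h1, pow_one, pow_zero, one_mul]
      apply sup_le <;> rw [Submodule.map_le_iff_le_comap] <;> intro v hv <;>
        simp only [Submodule.mem_comap, LinearMap.mulLeft_apply,
          mem_homogeneousSubmodule] at *
      · simpa [Nat.add_comm] using (isHomogeneous_X K (Fin.castSucc i)).mul hv
      · simpa [Nat.add_comm k 1] using ((isHomogeneous_X K (Fin.last n)).pow k).mul hv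
    · intro p hp
      rw [mem_homogeneousSubmodule] at hp
      rw [p.as_sum]
      apply Submodule.sum_mem
      intro m hm
      have hdeg : m.degree = k + 1 := by
        rw [Finsupp.degree_eq_weight_one]
        exact hp (mem_support_iff.mp hm)
      set c := coeff m p with hc
      by_cases h : ∀ i : Fin n, m (Fin.castSucc i) = 0
      · -- m is supported on the last variable
        have hml : m = Finsupp.single (Fin.last n) (m (Fin.last n)) := by
          ext j
          refine Fin.lastCases ?_ ?_ j
          · simp
          · intro i
            rw [h i, Finsupp.single_apply]
            rw [if_neg (Fin.castSucc_lt_last i).ne']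
        rw [hml, myDegree_single] at hdeg
        have hm' : m = Finsupp.single (Fin.last n) (k + 1) := by rw [hml, hdeg]
        have key : monomial m c = (X (Fin.castSucc (⟨0, hn⟩ : Fin n)) ^ 0 *
            X (Fin.last n) ^ k) * monomial (Finsupp.single (Fin.last n) 1) c := by
          rw [pow_zero, one_mul, X_pow_eq_monomial, monomial_mul, one_mul,
            ← Finsupp.single_add, hm']
        apply Submodule.mem_iSup_of_mem (⟨0, hn⟩ : Fin n)
        unfold Wspace mulSub
        rw [h0]
        apply Submodule.mem_sup_right
        refine ⟨monomial (Finsupp.single (Fin.last n) 1) c, ?_, ?_⟩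
        · simp only [SetLike.mem_coe, mem_homogeneousSubmodule]
          exact isHomogeneous_monomial c (myDegree_single _ _)
        · rw [LinearMap.mulLeft_apply, ← key]
      · push_neg at h
        obtain ⟨i, hi⟩ := h
        set j := Fin.castSucc i with hj
        have hle : Finsupp.single j 1 ≤ m := by
          rw [Finsupp.single_le_iff]
          omega
        set m' := m - Finsupp.single j 1 with hm'
        have hadd : Finsupp.single j 1 + m' = m := add_tsub_cancel_of_le hle
        have hdeg' : m'.degree = k := by
          have h2 := congrArg Finsupp.degree hadd
          rw [myDegree_add, myDegree_single, hdeg] at h2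
          omega
        have key : monomial m c = X j ^ (k + 1 - k) * monomial m' c := by
          rw [h1, X_pow_eq_monomial, monomial_mul, one_mul, hadd]
        apply Submodule.mem_iSup_of_mem i
        unfold Wspace mulSub
        apply Submodule.mem_sup_left
        refine ⟨monomial m' c, ?_, ?_⟩
        · simp only [SetLike.mem_coe, mem_homogeneousSubmodule]
          exact isHomogeneous_monomial c hdeg'
        · rw [LinearMap.mulLeft_apply, ← key]
end

section
/- Let n ≥ 3, k ≥ 1, d = k+1 and 2 ≤ s ≤ n−1 be integers, and assume C(k+1+n,n) ≤ s·(C(k+n,n)+n) and s·(n−s+1) < C(n−s+k+1, k+1). Then for all linearly independent linear forms L_1,…,L_s ∈ R_1 and all F_1,…,F_s ∈ R_k, dim_K(W(L_1,F_1;k+1)+…+W(L_s,F_s;k+1)) ≤ C(k+1+n,n) − C(n−s+k+1, k+1) + s·(n−s+1); in particular the sum is a proper subspace of R_{k+1}, with codimension at least C(n−s+k+1,k+1) − s(n−s+1). -/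
open MvPolynomial

section Counting
variable {K : Type*} [Field K] {σ : Type*} [Fintype σ] [DecidableEq σ]

noncomputable def degreeSetEquiv (σ : Type*) [Fintype σ] [DecidableEq σ] (e : ℕ) :
    Sym σ e ≃ {d : σ →₀ ℕ // d.degree = e} :=
  (Sym.equivNatSum σ e).trans <| Equiv.subtypeEquivRight <| fun d => by
    rw [Finsupp.degree_eq_weight_one]
    simp [Finsupp.weight_apply, Finsupp.sum]

noncomputable instance degreeSetFintype (e : ℕ) : Fintype {d : σ →₀ ℕ // d.degree = e} :=
  Fintype.ofEquiv _ (degreeSetEquiv σ e)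

lemma card_degreeSet (e : ℕ) :
    Fintype.card {d : σ →₀ ℕ // d.degree = e} = (Fintype.card σ + e - 1).choose e := by
  rw [← Fintype.card_congr (degreeSetEquiv σ e), Sym.card_sym_eq_choose]

noncomputable def homogBasis (e : ℕ) :
    Module.Basis {d : σ →₀ ℕ // d.degree = e} K (homogeneousSubmodule σ K e) := by
  rw [homogeneousSubmodule_eq_finsupp_supported]
  exact basisRestrictSupport K _

instance homog_fd (e : ℕ) : FiniteDimensional K (homogeneousSubmodule σ K e) :=
  Module.Finite.of_basis (homogBasis e)

lemma finrank_homog (e : ℕ) :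
    Module.finrank K (homogeneousSubmodule σ K e) = (Fintype.card σ + e - 1).choose e := by
  rw [Module.finrank_eq_card_basis (homogBasis (K := K) (σ := σ) e)]
  exact card_degreeSet e

end Counting

section SpanOne
variable {K : Type*} [Field K] {σ : Type*}

lemma degree_one_single {v : σ →₀ ℕ} (h : v.degree = 1) : ∃ j, v = Finsupp.single j 1 := by
  classical
  have hc : Multiset.card v.toMultiset = 1 := by
    rw [Finsupp.card_toMultiset]
    simpa [Finsupp.degree_apply, Finsupp.sum] using h
  obtain ⟨a, ha⟩ := Multiset.card_eq_one.mp hc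
  exact ⟨a, by rw [← Finsupp.toMultiset_toFinsupp v, ha, Multiset.toFinsupp_singleton]⟩

lemma homog_one_eq_span :
    homogeneousSubmodule σ K 1 = Submodule.span K (Set.range (X : σ → MvPolynomial σ K)) := by
  apply le_antisymm
  · intro p hp
    rw [p.as_sum]
    apply Submodule.sum_mem
    intro v hv
    have hdeg : v.degree = 1 := by
      rw [mem_homogeneousSubmodule] at hp
      rw [Finsupp.degree_eq_weight_one]
      exact hp (MvPolynomial.mem_support_iff.mp hv)
    obtain ⟨j, rfl⟩ := degree_one_single hdeg
    have : (monomial (Finsupp.single j 1)) (coeff (Finsupp.single j 1) p)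
        = (coeff (Finsupp.single j 1) p) • X j := by
      rw [MvPolynomial.smul_eq_C_mul, MvPolynomial.X, MvPolynomial.C_mul_monomial, mul_one]
    rw [this]
    exact Submodule.smul_mem _ _ (Submodule.subset_span ⟨j, rfl⟩)
  · rw [Submodule.span_le]
    rintro _ ⟨j, rfl⟩
    exact isHomogeneous_X _ _

end SpanOne

set_option maxHeartbeats 4000000 in
set_option synthInstance.maxHeartbeats 400000 in
/-- for `d = k+1`, `2 ≤ s ≤ n-1`, when the expected dimension is `C(k+1+n,n)`
(all of `R_{k+1}`) and `s(n−s+1) < C(n−s+k+1,k+1)`, the span of the tangent spaces is a proper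
subspace of `R_{k+1}`, of dimension at most `C(k+1+n,n) − C(n−s+k+1,k+1) + s(n−s+1)`. -/
theorem stmt8 {K : Type*} [Field K] [CharZero K] (n k s : ℕ) (hn : 3 ≤ n) (hk : 1 ≤ k)
    (hs : 2 ≤ s) (hsn : s ≤ n - 1)
    (hexp : (k + 1 + n).choose n ≤ s * ((k + n).choose n + n))
    (hdef : s * (n - s + 1) < (n - s + k + 1).choose (k + 1)) :
    ∀ L : Fin s → MvPolynomial (Fin (n+1)) K,
      (∀ i, L i ∈ homogeneousSubmodule (Fin (n+1)) K 1) → LinearIndependent K L →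
      ∀ F : Fin s → MvPolynomial (Fin (n+1)) K,
        (∀ i, F i ∈ homogeneousSubmodule (Fin (n+1)) K k) →
      Module.finrank K ↥(⨆ i : Fin s, Wspace k (k + 1) (L i) (F i)) ≤
          (k + 1 + n).choose n - (n - s + k + 1).choose (k + 1) + s * (n - s + 1) ∧
        (⨆ i : Fin s, Wspace k (k + 1) (L i) (F i)) <
          homogeneousSubmodule (Fin (n+1)) K (k + 1) := by
  classical
  intro L hL hLi F hF
  have hsn' : s ≤ n := le_trans hsn (Nat.sub_le n 1)
  let σ := Fin (n+1)
  set m : ℕ := n + 1 - s with hm_def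
  have hm_le : m ≤ n + 1 := Nat.sub_le _ _
  set V : Submodule K (MvPolynomial σ K) := homogeneousSubmodule σ K 1 with hVdef
  set P : Submodule K (MvPolynomial σ K) := homogeneousSubmodule σ K (k+1) with hPdef
  set Rk : Submodule K (MvPolynomial σ K) := homogeneousSubmodule σ K k with hRkdef
  have hXmem : ∀ j : σ, X j ∈ V := fun j => isHomogeneous_X K j
  set L' : Fin s → V := fun i => ⟨L i, hL i⟩ with hL'def
  have hLi' : LinearIndependent K L' := LinearIndependent.of_comp V.subtype hLi
  have hLrange : LinearIndepOn K id (Set.range L') := (linearIndepOn_id_range_iff hLi'.injective).mpr hLi'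
  set RL : Set V := Set.range L' with hRLdef
  set ι : Set ↥V := hLrange.extend (Set.subset_univ RL) with hιdef
  set b : Module.Basis ↥ι K ↥V := Module.Basis.extend hLrange with hbdef
  haveI : FiniteDimensional K V := homog_fd 1
  haveI : Fintype ↥ι := FiniteDimensional.fintypeBasisIndex b
  have hcard_ι : Fintype.card ↥ι = n + 1 := by
    rw [← Module.finrank_eq_card_basis b, hVdef, finrank_homog 1, Fintype.card_fin]
    simp
  have hinjL' : Function.Injective L' := hLi'.injective
  have eRL : {j : ↥ι // (j : ↥V) ∈ RL} ≃ ↥RL :=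
    { toFun := fun j => ⟨j.1.1, j.2⟩
      invFun := fun x => ⟨⟨x.1, hLrange.subset_extend _ x.2⟩, x.2⟩
      left_inv := fun j => rfl
      right_inv := fun x => rfl }
  have eRL2 : ↥RL ≃ Fin s := (Equiv.ofInjective L' hinjL').symm
  have hcardRL : Fintype.card {j : ↥ι // (j : ↥V) ∈ RL} = s := by
    rw [Fintype.card_congr (eRL.trans eRL2), Fintype.card_fin]
  have hcard_ι' : Fintype.card {j : ↥ι // (j : ↥V) ∉ RL} = m := by
    have h := Fintype.card_subtype_compl (fun j : ↥ι => (j : ↥V) ∈ RL)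
    rw [hcard_ι, hcardRL] at h
    simpa [hm_def] using h
  set e := Fintype.equivFinOfCardEq hcard_ι' with hedef
  set g : ↥ι → MvPolynomial σ K :=
    fun j => if h : (j : ↥V) ∈ RL then 0 else X (Fin.castLE hm_le (e ⟨j, h⟩)) with hgdef
  set q : ↥V →ₗ[K] MvPolynomial σ K := b.constr K g with hqdef
  set G : σ → MvPolynomial σ K := fun j => q ⟨X j, hXmem j⟩ with hGdef
  set ψ : MvPolynomial σ K →ₐ[K] MvPolynomial σ K := aeval G with hψdef
  -- ψ agrees with q on V
  have hspanS : Submodule.span K {x : ↥V | ∃ j, (x : MvPolynomial σ K) = X j} = ⊤ := by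
    apply Submodule.map_injective_of_injective (Submodule.injective_subtype V)
    rw [Submodule.map_span, Submodule.map_top, Submodule.range_subtype]
    have himg : V.subtype '' {x : ↥V | ∃ j, (x : MvPolynomial σ K) = X j}
        = Set.range (X : σ → MvPolynomial σ K) := by
      ext y
      constructor
      · rintro ⟨x, ⟨j, hj⟩, rfl⟩; exact ⟨j, hj.symm⟩
      · rintro ⟨j, rfl⟩; exact ⟨⟨X j, hXmem j⟩, ⟨j, rfl⟩, rfl⟩
    rw [himg, hVdef, ← homog_one_eq_span]
  have hψV : ∀ x : ↥V, ψ (x : MvPolynomial σ K) = q x := by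
    have heq : (ψ.toLinearMap.comp V.subtype) = q := by
      apply LinearMap.ext_on hspanS
      rintro x ⟨j, hj⟩
      have hx : x = ⟨X j, hXmem j⟩ := Subtype.ext hj
      subst hx
      simp [hψdef, hGdef]
    intro x
    exact LinearMap.congr_fun heq x
  have hψL : ∀ i, ψ (L i) = 0 := by
    intro i
    have h1 : ψ (L i) = q (L' i) := hψV (L' i)
    have h2 : b ⟨L' i, hLrange.subset_extend _ (Set.mem_range_self i)⟩ = L' i :=
      Module.Basis.extend_apply_self hLrange _
    rw [h1, ← h2, hqdef, Module.Basis.constr_basis]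
    exact dif_pos (Set.mem_range_self i)
  have hψb : ∀ j : {j : ↥ι // (j : ↥V) ∉ RL},
      ψ ((b j.1 : ↥V) : MvPolynomial σ K) = X (Fin.castLE hm_le (e j)) := by
    intro j
    rw [hψV (b j.1)]
    have h2 : (b j.1 : ↥V) = b j.1 := rfl
    have h3 : q (b j.1) = g j.1 := by rw [hqdef]; exact Module.Basis.constr_basis b K g j.1
    rw [h3, hgdef]
    exact dif_neg j.2
  -- homogeneity facts
  have hbV : ∀ j : ↥ι, ((b j : ↥V) : MvPolynomial σ K).IsHomogeneous 1 := fun j => (b j).2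
  set f : Fin m → σ := Fin.castLE hm_le with hfdef
  set χ : MvPolynomial (Fin m) K →ₐ[K] MvPolynomial σ K :=
    aeval (fun t => ((b (e.symm t).1 : ↥V) : MvPolynomial σ K)) with hχdef
  have hcomp : ψ.comp χ = (rename f : MvPolynomial (Fin m) K →ₐ[K] MvPolynomial σ K) := by
    apply MvPolynomial.algHom_ext
    intro t
    simp only [AlgHom.comp_apply, hχdef, aeval_X, rename_X]
    rw [hψb (e.symm t), Equiv.apply_symm_apply]
  have hχhom : ∀ p : MvPolynomial (Fin m) K, p.IsHomogeneous (k+1) → (χ p).IsHomogeneous (k+1) := by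
    intro p hp
    have := hp.aeval (fun t => ((b (e.symm t).1 : ↥V) : MvPolynomial σ K)) (fun t => hbV _)
    simpa [hχdef] using this
  -- T and its kernel property
  set T : Submodule K (MvPolynomial σ K) := ⨆ i, mulSub (L i) Rk with hTdef
  have hTP : T ≤ P := by
    apply iSup_le
    intro i
    rintro x ⟨p, hp, rfl⟩
    have : ((L i) * p).IsHomogeneous (1 + k) := (hL i).mul hp
    simpa [LinearMap.mulLeft_apply, hPdef, mem_homogeneousSubmodule, Nat.add_comm] using this
  have hTker : T ≤ LinearMap.ker ψ.toLinearMap := by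
    apply iSup_le
    intro i
    rintro x ⟨p, hp, rfl⟩
    simp only [LinearMap.mem_ker, AlgHom.toLinearMap_apply, LinearMap.mulLeft_apply]
    rw [map_mul, hψL i, zero_mul]
  -- the image space M
  have hfinj : Function.Injective (rename (R := K) f) :=
    rename_injective f (Fin.castLE_injective hm_le)
  set M : Submodule K (MvPolynomial σ K) :=
    (homogeneousSubmodule (Fin m) K (k+1)).map (rename f).toLinearMap with hMdef
  have hMrank : Module.finrank K M = (n - s + k + 1).choose (k+1) := by
    have hinj' : Function.Injective (rename (R := K) f).toLinearMap := hfinj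
    have h := LinearEquiv.finrank_eq
      (Submodule.equivMapOfInjective (rename (R := K) f).toLinearMap hinj'
        (homogeneousSubmodule (Fin m) K (k+1)))
    rw [← h, finrank_homog (k+1), Fintype.card_fin]
    congr 1
    omega
  set φk : ↥P →ₗ[K] MvPolynomial σ K := ψ.toLinearMap ∘ₗ P.subtype with hφkdef
  have hMle : M ≤ LinearMap.range φk := by
    rintro x ⟨p, hp, rfl⟩
    refine ⟨⟨χ p, hχhom p hp⟩, ?_⟩
    simpa [hφkdef] using AlgHom.congr_fun hcomp p
  haveI : FiniteDimensional K P := homog_fd _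
  have hrank_range : (n-s+k+1).choose (k+1) ≤ Module.finrank K (LinearMap.range φk) := by
    rw [← hMrank]
    exact Submodule.finrank_mono hMle
  have hrn := LinearMap.finrank_range_add_finrank_ker φk
  have hsymm : (k+1+n).choose (k+1) = (k+1+n).choose n := by
    have h := Nat.choose_symm (show k+1 ≤ k+1+n by omega)
    rw [show k+1+n-(k+1) = n by omega] at h
    exact h.symm
  have hfrP : Module.finrank K P = (k+1+n).choose n := by
    rw [hPdef, finrank_homog (k+1), Fintype.card_fin, show n + 1 + (k+1) - 1 = k+1+n by omega,
      hsymm]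
  haveI : FiniteDimensional K T := Submodule.finiteDimensional_of_le hTP
  have hTrank : Module.finrank K T ≤ (k+1+n).choose n - (n-s+k+1).choose (k+1) := by
    have h1 : Module.finrank K (T.comap P.subtype) = Module.finrank K T :=
      (Submodule.comapSubtypeEquivOfLe hTP).finrank_eq
    have h2 : T.comap P.subtype ≤ LinearMap.ker φk := by
      intro x hx
      have := hTker hx
      simpa [hφkdef, LinearMap.mem_ker] using this
    have h3 : Module.finrank K (T.comap P.subtype) ≤ Module.finrank K (LinearMap.ker φk) :=
      Submodule.finrank_mono h2
    omega
  -- the U space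
  set u : Fin s × {j : ↥ι // (j : ↥V) ∉ RL} → MvPolynomial σ K :=
    fun p => F p.1 * ((b p.2.1 : ↥V) : MvPolynomial σ K) with hudef
  set U := Submodule.span K (Set.range u) with hUdef
  haveI : FiniteDimensional K U := FiniteDimensional.span_of_finite K (Set.finite_range u)
  have hUrank : Module.finrank K U ≤ s * (n - s + 1) := by
    haveI : Fintype ↥(Set.range u) := (Set.finite_range u).fintype
    have h1 := finrank_span_le_card (R := K) (Set.range u)
    have h2 : (Set.range u).toFinset.card ≤ s * m := by
      rw [Set.toFinset_card]
      calc Fintype.card ↥(Set.range u) ≤ Fintype.card (Fin s × {j : ↥ι // (j : ↥V) ∉ RL}) :=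
            Fintype.card_range_le u
        _ = s * m := by rw [Fintype.card_prod, Fintype.card_fin, hcard_ι']
    have hms : s * m = s * (n - s + 1) := by
      have : m = n - s + 1 := by omega
      rw [this]
    rw [hUdef]
    omega
  have hUP : U ≤ P := by
    rw [hUdef, Submodule.span_le]
    rintro _ ⟨p, rfl⟩
    exact (hF p.1).mul (hbV p.2.1)
  -- V is spanned by the basis image
  have hVspan : homogeneousSubmodule σ K 1
      = Submodule.span K (Set.range (fun j : ↥ι => ((b j : ↥V) : MvPolynomial σ K))) := by
    rw [← hVdef]
    conv_lhs => rw [← Submodule.map_subtype_top V, ← b.span_eq]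
    rw [Submodule.map_span]
    congr 1
    rw [← Set.range_comp]
    rfl
  -- the main containment
  have hWle : (⨆ i : Fin s, Wspace k (k + 1) (L i) (F i)) ≤ T ⊔ U := by
    apply iSup_le
    intro i
    have hWeq : Wspace k (k+1) (L i) (F i)
        = mulSub (L i) (homogeneousSubmodule (Fin (n+1)) K k)
          ⊔ mulSub (F i) (homogeneousSubmodule (Fin (n+1)) K 1) := by
      simp only [Wspace, show k+1-k = 1 from by omega, Nat.sub_self,
        pow_one, pow_zero, one_mul]
    rw [hWeq]
    apply sup_le
    · exact le_trans (le_iSup (fun i => mulSub (L i) Rk) i) le_sup_left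
    · have hms : mulSub (F i) (homogeneousSubmodule σ K 1)
          = Submodule.span K ((LinearMap.mulLeft K (F i)) ''
              (Set.range (fun j : ↥ι => ((b j : ↥V) : MvPolynomial σ K)))) := by
        rw [mulSub, hVspan, Submodule.map_span]
      rw [hms, Submodule.span_le]
      rintro _ ⟨_, ⟨j, rfl⟩, rfl⟩
      by_cases hj : (j : ↥V) ∈ RL
      · obtain ⟨i0, hi0⟩ := hj
        have hbj : (b j : ↥V) = (j : ↥V) := Module.Basis.extend_apply_self hLrange j
        have hval : (LinearMap.mulLeft K (F i)) ((b j : ↥V) : MvPolynomial σ K)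
            = L i0 * F i := by
          rw [LinearMap.mulLeft_apply, hbj, ← hi0]
          exact mul_comm _ _
        rw [hval]
        apply Submodule.mem_sup_left
        exact (le_iSup (fun i => mulSub (L i) Rk) i0) ⟨F i, hF i, rfl⟩
      · apply Submodule.mem_sup_right
        apply Submodule.subset_span
        exact ⟨(i, ⟨j, hj⟩), rfl⟩
  have hWP : (⨆ i : Fin s, Wspace k (k + 1) (L i) (F i)) ≤ P :=
    le_trans hWle (sup_le hTP hUP)
  haveI : FiniteDimensional K ↥(T ⊔ U) := Submodule.finiteDimensional_of_le (sup_le hTP hUP)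
  haveI : FiniteDimensional K ↥(⨆ i : Fin s, Wspace k (k + 1) (L i) (F i)) :=
    Submodule.finiteDimensional_of_le hWP
  have hmain : Module.finrank K ↥(⨆ i : Fin s, Wspace k (k + 1) (L i) (F i)) ≤
      (k + 1 + n).choose n - (n - s + k + 1).choose (k + 1) + s * (n - s + 1) := by
    have h1 : Module.finrank K ↥(⨆ i : Fin s, Wspace k (k + 1) (L i) (F i))
        ≤ Module.finrank K ↥(T ⊔ U) := Submodule.finrank_mono hWle
    have h2 := Submodule.finrank_add_le_finrank_add_finrank T U
    omega
  refine ⟨hmain, ?_⟩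
  apply Submodule.lt_of_le_of_finrank_lt_finrank hWP
  have hCle : (n-s+k+1).choose (k+1) ≤ (k+1+n).choose n := by
    rw [← hsymm]
    exact Nat.choose_le_choose _ (by omega)
  rw [hfrP]
  omega
end

section
/- Let n ≥ 2, k ≥ 2, 2 ≤ s ≤ n and k+2 ≤ d ≤ 2k be integers, and assume C(d+n,n) ≤ s·(C(k+n,n)+n). Then for all linearly independent linear forms L_1,…,L_s ∈ R_1 and all F_1,…,F_s ∈ R_k, the sum W(L_1,F_1;d)+…+W(L_s,F_s;d) is contained in the degree-d part of the ideal (L_1,…,L_s), and therefore dim_K(W(L_1,F_1;d)+…+W(L_s,F_s;d)) ≤ C(d+n,n) − C(n−s+d, d); in particular the sum never equals R_d, so the s-th secant of the k-th osculating variety is defective with defect at least C(n−s+d,d). -/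
open MvPolynomial

open Module Submodule

section AuxCount

lemma aux_degree_card {σ : Type*} (m : σ →₀ ℕ) :
    Finsupp.degree m = Multiset.card m.toMultiset := by
  rw [Finsupp.card_toMultiset]
  simp [Finsupp.degree_apply, Finsupp.sum]

lemma aux_eq_single_of_degree_one {σ : Type*} {m : σ →₀ ℕ} (h : Finsupp.degree m = 1) :
    ∃ j, m = Finsupp.single j 1 := by
  classical
  rw [aux_degree_card] at h
  obtain ⟨a, ha⟩ := Multiset.card_eq_one.mp h
  refine ⟨a, ?_⟩
  have := congrArg Multiset.toFinsupp ha
  rwa [Finsupp.toMultiset_toFinsupp, Multiset.toFinsupp_singleton] at this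

lemma aux_card_degree (N d : ℕ) :
    Nat.card {m : Fin N →₀ ℕ | Finsupp.degree m = d} = (N + d - 1).choose d := by
  classical
  have e : {m : Fin N →₀ ℕ | Finsupp.degree m = d} ≃ Sym (Fin N) d :=
    { toFun := fun m => ⟨m.1.toMultiset, by rw [← aux_degree_card]; exact m.2⟩
      invFun := fun s => ⟨Multiset.toFinsupp s.1, by
        show Finsupp.degree _ = d
        rw [aux_degree_card, Multiset.toFinsupp_toMultiset]
        exact s.2⟩
      left_inv := fun m => by
        ext1
        exact Finsupp.toMultiset_toFinsupp m.1
      right_inv := fun s => by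
        ext1
        exact Multiset.toFinsupp_toMultiset s.1 }
  rw [Nat.card_congr e, Nat.card_eq_fintype_card, Sym.card_sym_eq_choose, Fintype.card_fin]

lemma aux_homog_equiv (N d : ℕ) {K : Type*} [Field K] :
    ∃ _ : (homogeneousSubmodule (Fin N) K d) ≃ₗ[K]
      ({m : Fin N →₀ ℕ | Finsupp.degree m = d} →₀ K), True := by
  classical
  exact ⟨(LinearEquiv.ofEq _ _ (homogeneousSubmodule_eq_finsupp_supported (Fin N) K d)).trans
    (AddMonoidAlgebra.supportedEquivFinsupp _), trivial⟩

end AuxCount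

section Ell

variable {K : Type*} [Field K] {N : ℕ}

/-- the linear form associated to a coefficient vector -/
noncomputable def ell (K : Type*) [Field K] (N : ℕ) :
    (Fin N → K) →ₗ[K] MvPolynomial (Fin N) K where
  toFun x := ∑ j, C (x j) * X j
  map_add' x y := by simp [add_mul, Finset.sum_add_distrib]
  map_smul' c x := by simp [Finset.smul_sum, MvPolynomial.smul_eq_C_mul, mul_assoc]

lemma ell_single (j : Fin N) : ell K N (Pi.single j 1) = X j := by
  classical
  simp only [ell, LinearMap.coe_mk, AddHom.coe_mk]
  rw [Finset.sum_eq_single j]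
  · simp
  · intro b _ hb
    rw [Pi.single_eq_of_ne hb]
    simp
  · simp

lemma ell_homog (x : Fin N → K) : (ell K N x).IsHomogeneous 1 :=
  IsHomogeneous.sum _ _ _ fun j _ => isHomogeneous_C_mul_X (x j) j

lemma coeff_ell (x : Fin N → K) (j : Fin N) :
    coeff (Finsupp.single j 1) (ell K N x) = x j := by
  classical
  simp only [ell, LinearMap.coe_mk, AddHom.coe_mk, MvPolynomial.coeff_sum, coeff_C_mul,
    coeff_X']
  rw [Finset.sum_eq_single j]
  · simp
  · intro b _ hb
    rw [if_neg, mul_zero]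
    simpa using (fun h => hb (by simpa using (Finsupp.single_left_inj one_ne_zero).mp h))
  · simp

lemma ell_injective : Function.Injective (ell K N) := by
  intro x y h
  funext j
  rw [← coeff_ell x j, h, coeff_ell]

lemma eq_ell_coeffs {p : MvPolynomial (Fin N) K} (hp : p.IsHomogeneous 1) :
    p = ell K N fun j => coeff (Finsupp.single j 1) p := by
  apply MvPolynomial.ext
  intro m
  by_cases h : Finsupp.degree m = 1
  · obtain ⟨j, rfl⟩ := aux_eq_single_of_degree_one h
    rw [coeff_ell]
  · rw [hp.coeff_eq_zero h, (ell_homog _).coeff_eq_zero h]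

end Ell

section Main

lemma degree_embDomain {α β : Type*} (f : α ↪ β) (m : α →₀ ℕ) :
    Finsupp.degree (Finsupp.embDomain f m) = Finsupp.degree m := by
  simp [Finsupp.degree_apply, Finsupp.support_embDomain, Finset.sum_map, Finsupp.embDomain_apply]

set_option synthInstance.maxHeartbeats 1000000 in
set_option maxHeartbeats 1000000 in
lemma main_bound {K : Type*} [Field K] (n s d : ℕ) (hs1 : 1 ≤ s) (hsn : s ≤ n)
    (L : Fin s → MvPolynomial (Fin (n+1)) K) (hL : ∀ i, (L i).IsHomogeneous 1)
    (hLI : LinearIndependent K L)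
    (M : Submodule K (MvPolynomial (Fin (n+1)) K))
    (hM1 : M ≤ homogeneousSubmodule (Fin (n+1)) K d)
    (hM2 : M ≤ (Ideal.span (Set.range L)).restrictScalars K) :
    Module.finrank K ↥M ≤ (d + n).choose n - (n - s + d).choose d := by
  classical
  -- coefficient vectors
  set v : Fin s → (Fin (n+1) → K) := fun i j => coeff (Finsupp.single j 1) (L i) with hv
  have hLv : ∀ i, L i = ell K (n+1) (v i) := fun i => eq_ell_coeffs (hL i)
  have hvLI : LinearIndependent K v := by
    apply LinearIndependent.of_comp (ell K (n+1))
    convert hLI using 1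
    funext i
    exact (hLv i).symm
  -- complement
  obtain ⟨Cc, hCc⟩ := Submodule.exists_isCompl (span K (Set.range v))
  set t := n + 1 - s 
  have hfr : finrank K Cc = t := by
    have h1 := Submodule.finrank_add_eq_of_isCompl hCc
    rw [finrank_span_eq_card hvLI] at h1
    have h2 : finrank K (Fin (n+1) → K) = n+1 := by
      simp
    simp only [Fintype.card_fin] at h1
    omega
  set c : Basis (Fin t) K Cc := Module.finBasisOfFinrankEq K Cc hfr with hc
  set c' : Fin t → (Fin (n+1) → K) := fun r => (c r : Fin (n+1) → K) with hc'
  have hcLI : LinearIndependent K c' := c.linearIndependent.map' Cc.subtype (Submodule.ker_subtype Cc)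
  have hspanc : span K (Set.range c') = Cc := by
    have : Set.range c' = Cc.subtype '' Set.range c := by
      rw [← Set.range_comp]; rfl
    rw [this, Submodule.span_image, c.span_eq, Submodule.map_subtype_top]
  have hindep : LinearIndependent K (Sum.elim v c') := by
    apply LinearIndependent.sum_type hvLI hcLI
    rw [hspanc]
    exact hCc.disjoint
  have hsp : ⊤ ≤ span K (Set.range (Sum.elim v c')) := by
    rw [Set.Sum.elim_range, Submodule.span_union, hspanc, hCc.sup_eq_top]
  set b : Basis (Fin s ⊕ Fin t) K (Fin (n+1) → K) := Basis.mk hindep hsp with hb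
  set e : (Fin s ⊕ Fin t) ≃ Fin (n+1) := finSumFinEquiv.trans (finCongr (by omega)) with he
  set B : (Fin (n+1) → K) ≃ₗ[K] (Fin (n+1) → K) := b.equiv (Pi.basisFun K (Fin (n+1))) e with hB
  set low : Fin s → Fin (n+1) := fun i => e (Sum.inl i) with hlow
  set high : Fin t → Fin (n+1) := fun r => e (Sum.inr r) with hhigh
  have hBv : ∀ i, B (v i) = Pi.single (low i) 1 := by
    intro i
    have h1 : B (b (Sum.inl i)) = Pi.basisFun K (Fin (n+1)) (e (Sum.inl i)) := b.equiv_apply _ _ _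
    rw [Basis.mk_apply] at h1
    simpa [Pi.basisFun_apply] using h1
  set φ : MvPolynomial (Fin (n+1)) K →ₐ[K] MvPolynomial (Fin (n+1)) K :=
    aeval (fun j => ell K (n+1) (B (Pi.single j 1))) with hφ
  set φ' : MvPolynomial (Fin (n+1)) K →ₐ[K] MvPolynomial (Fin (n+1)) K :=
    aeval (fun j => ell K (n+1) (B.symm (Pi.single j 1))) with hφ'
  set q : MvPolynomial (Fin (n+1)) K →ₐ[K] MvPolynomial (Fin (n+1)) K :=
    aeval (fun j => if ∃ r, high r = j then X j else 0) with hq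
  have hφell : ∀ x, φ (ell K (n+1) x) = ell K (n+1) (B x) := by
    have h : (φ.toLinearMap ∘ₗ ell K (n+1)) = ((ell K (n+1)) ∘ₗ B.toLinearMap) := by
      apply (Pi.basisFun K (Fin (n+1))).ext
      intro j
      simp only [LinearMap.comp_apply, Pi.basisFun_apply, AlgHom.toLinearMap_apply,
        LinearEquiv.coe_coe]
      rw [ell_single, hφ, aeval_X]
    exact fun x => LinearMap.congr_fun h x
  have hφ'ell : ∀ x, φ' (ell K (n+1) x) = ell K (n+1) (B.symm x) := by
    have h : (φ'.toLinearMap ∘ₗ ell K (n+1)) = ((ell K (n+1)) ∘ₗ (B.symm : (Fin (n+1) → K) →ₗ[K] (Fin (n+1) → K))) := by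
      apply (Pi.basisFun K (Fin (n+1))).ext
      intro j
      simp only [LinearMap.comp_apply, Pi.basisFun_apply, AlgHom.toLinearMap_apply,
        LinearEquiv.coe_coe]
      rw [ell_single, hφ', aeval_X]
    exact fun x => LinearMap.congr_fun h x
  have hcomp : ∀ p, φ (φ' p) = p := by
    have h : φ.comp φ' = AlgHom.id K _ := by
      apply MvPolynomial.algHom_ext
      intro j
      simp only [AlgHom.comp_apply, AlgHom.id_apply]
      rw [hφ', aeval_X, hφell, LinearEquiv.apply_symm_apply, ell_single]
    exact fun p => AlgHom.congr_fun h p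
  set π : MvPolynomial (Fin (n+1)) K →ₐ[K] MvPolynomial (Fin (n+1)) K := q.comp φ with hπ
  have hπL : ∀ i, π (L i) = 0 := by
    intro i
    have h1 : φ (L i) = X (low i) := by
      rw [hLv i, hφell, hBv, ell_single]
    rw [hπ, AlgHom.comp_apply, h1, hq, aeval_X, if_neg]
    rintro ⟨r, hr⟩
    have : Sum.inr r = Sum.inl i := e.injective hr
    simp at this
  have hkerπ : ∀ p ∈ Ideal.span (Set.range L), π p = 0 := by
    intro p hp
    have hle : Ideal.span (Set.range L) ≤ RingHom.ker π := by
      rw [Ideal.span_le]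
      rintro x ⟨i, rfl⟩
      exact RingHom.mem_ker.mpr (hπL i)
    exact RingHom.mem_ker.mp (hle hp)
  -- homogeneity
  have hφ'homog : ∀ (m : Fin (n+1) →₀ ℕ), Finsupp.degree m = d →
      (φ' (monomial m 1)).IsHomogeneous d := by
    intro m hm
    have h1 := (isHomogeneous_monomial (1:K) hm).aeval
      (fun j => ell K (n+1) (B.symm (Pi.single j 1))) (fun j => ell_homog _)
    simpa [hφ'] using h1
  have hqmono : ∀ (m : Fin (n+1) →₀ ℕ), (↑m.support ⊆ Set.range high) →
      q (monomial m 1) = monomial m 1 := by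
    intro m hsupp
    rw [hq, aeval_monomial, map_one, one_mul]
    conv_rhs => rw [monomial_eq, C_1, one_mul]
    apply Finsupp.prod_congr
    intro j hj
    have hxr : ∃ r, high r = j := hsupp (Finset.mem_coe.mpr hj)
    rw [if_pos hxr]
  -- finite dimensionality of the homogeneous component
  set Hd := homogeneousSubmodule (Fin (n+1)) K d with hHd
  set Dset : Set (Fin (n+1) →₀ ℕ) := {m | Finsupp.degree m = d} with hDset
  have hDfin : Dset.Finite := (Finsupp.finite_of_degree_le d).subset fun x hx => le_of_eq hx
  haveI : Finite ↥Dset := hDfin.to_subtype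
  haveI : Fintype ↥Dset := hDfin.fintype
  obtain ⟨E, -⟩ := aux_homog_equiv (n+1) d (K := K)
  haveI : FiniteDimensional K ↥Hd := LinearEquiv.finiteDimensional E.symm
  have hfrHd : finrank K ↥Hd = (d + n).choose n := by
    rw [E.finrank_eq, (Finsupp.linearEquivFunOnFinite K K ↥Dset).finrank_eq]
    rw [Module.finrank_pi, ← Nat.card_eq_fintype_card, aux_card_degree]
    have h1 : n + 1 + d - 1 = d + n := by omega
    have h2 := Nat.choose_symm (show d ≤ d + n by omega)
    rw [h1]
    rw [← h2, Nat.add_sub_cancel_left]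
  -- the monomials supported on the high variables
  set Tset : Set (Fin (n+1) →₀ ℕ) := {m | Finsupp.degree m = d ∧ ↑m.support ⊆ Set.range high}
    with hTset
  have hTfin : Tset.Finite := (Finsupp.finite_of_degree_le d).subset fun x hx => le_of_eq hx.1
  haveI : Finite ↥Tset := hTfin.to_subtype
  haveI : Fintype ↥Tset := hTfin.fintype
  set g : ↥Tset → MvPolynomial (Fin (n+1)) K := fun m => monomial m.1 1 with hg
  have hgLI : LinearIndependent K g :=
    (basisMonomials (Fin (n+1)) K).linearIndependent.comp Subtype.val Subtype.val_injective
  set ψ : ↥Hd →ₗ[K] MvPolynomial (Fin (n+1)) K := π.toLinearMap ∘ₗ Hd.subtype with hψ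
  have hψrange : span K (Set.range g) ≤ LinearMap.range ψ := by
    rw [Submodule.span_le]
    rintro _ ⟨m, rfl⟩
    have hmem : φ' (monomial m.1 1) ∈ Hd := hφ'homog m.1 m.2.1
    refine ⟨⟨_, hmem⟩, ?_⟩
    show π (φ' (monomial m.1 1)) = g m
    rw [hπ, AlgHom.comp_apply, hcomp]
    exact hqmono m.1 m.2.2
  have hhighinj : Function.Injective high := by
    intro a b hab
    have : (Sum.inr a : Fin s ⊕ Fin t) = Sum.inr b := e.injective hab
    simpa using this
  have hrange_ge : (n - s + d).choose d ≤ finrank K (LinearMap.range ψ) := by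
    have h1 : finrank K ↥(span K (Set.range g)) = Fintype.card ↥Tset :=
      finrank_span_eq_card hgLI
    have h2 : finrank K ↥(span K (Set.range g)) ≤ finrank K (LinearMap.range ψ) :=
      Submodule.finrank_mono hψrange
    have h3 : (n - s + d).choose d ≤ Fintype.card ↥Tset := by
      rw [← Nat.card_eq_fintype_card]
      have key : Nat.card {m : Fin t →₀ ℕ | Finsupp.degree m = d} ≤ Nat.card ↥Tset := by
        apply Nat.card_le_card_of_injective
          (fun m => (⟨Finsupp.embDomain ⟨high, hhighinj⟩ m.1, by
            rw [hTset]
            constructor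
            · rw [degree_embDomain]; exact m.2
            · intro x hx
              simp only [Finset.coe_map, Finsupp.support_embDomain] at hx
              obtain ⟨a, -, rfl⟩ := hx
              exact ⟨a, rfl⟩⟩ : ↥Tset))
        intro a b hab
        apply Subtype.ext
        exact Finsupp.embDomain_injective _ (congrArg Subtype.val hab)
      rw [aux_card_degree] at key
      have : t + d - 1 = n - s + d := by omega
      rwa [this] at key
    omega
  -- conclude
  have hcomap : M.comap Hd.subtype ≤ LinearMap.ker ψ := by
    rintro ⟨p, hpHd⟩ hp
    show ψ ⟨p, hpHd⟩ = 0
    have hpM : p ∈ M := hp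
    have h2 : p ∈ (Ideal.span (Set.range L)).restrictScalars K := hM2 hpM
    rw [Submodule.restrictScalars_mem] at h2
    have : π p = 0 := hkerπ p h2
    simpa [hψ] using this
  have heq : finrank K ↥M = finrank K ↥(M.comap Hd.subtype) :=
    (Submodule.comapSubtypeEquivOfLe hM1).finrank_eq.symm
  have h5 : finrank K ↥(M.comap Hd.subtype) ≤ finrank K ↥(LinearMap.ker ψ) :=
    Submodule.finrank_mono hcomap
  have h6 := LinearMap.finrank_range_add_finrank_ker ψ
  rw [hfrHd] at h6
  omega

end Main

/-- for `2 ≤ s ≤ n`, `k+2 ≤ d ≤ 2k`, when the expected dimension is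
`C(d+n,n)` (all of `R_d`), the sum of the `W(L_i,F_i;d)` is contained in the ideal
`(L_1,…,L_s)`, hence has dimension at most `C(d+n,n) − C(n−s+d,d)`: the s-th secant of the
k-th osculating variety is defective with defect at least `C(n−s+d,d)`. -/
theorem stmt11 {K : Type*} [Field K] [CharZero K] (n k s d : ℕ) (hn : 2 ≤ n) (hk : 2 ≤ k)
    (hs : 2 ≤ s) (hsn : s ≤ n) (hd1 : k + 2 ≤ d) (hd2 : d ≤ 2 * k)
    (hexp : (d + n).choose n ≤ s * ((k + n).choose n + n)) :
    ∀ L : Fin s → MvPolynomial (Fin (n+1)) K,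
      (∀ i, L i ∈ homogeneousSubmodule (Fin (n+1)) K 1) → LinearIndependent K L →
      ∀ F : Fin s → MvPolynomial (Fin (n+1)) K,
        (∀ i, F i ∈ homogeneousSubmodule (Fin (n+1)) K k) →
      (⨆ i : Fin s, Wspace k d (L i) (F i)) ≤
          (Ideal.span (Set.range L)).restrictScalars K ∧
        Module.finrank K ↥(⨆ i : Fin s, Wspace k d (L i) (F i)) ≤
          (d + n).choose n - (n - s + d).choose d := by
  intro L hL hLI F hF
  have hmem : ∀ i, Wspace k d (L i) (F i) ≤ (Ideal.span (Set.range L)).restrictScalars K := by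
    intro i
    rw [Wspace]
    apply sup_le
    · intro x hx
      obtain ⟨p, hp, rfl⟩ := hx
      show LinearMap.mulLeft K _ p ∈ _
      rw [LinearMap.mulLeft_apply, Submodule.restrictScalars_mem]
      have h : d - k = (d - k - 1) + 1 := by omega
      have heq : L i ^ (d - k) * p = L i * (L i ^ (d - k - 1) * p) := by
        rw [h, pow_succ, mul_comm (L i ^ (d - k - 1)), mul_assoc, Nat.add_sub_cancel]
      rw [heq]
      exact Ideal.mul_mem_right _ _ (Ideal.subset_span ⟨i, rfl⟩)
    · intro x hx
      obtain ⟨p, hp, rfl⟩ := hx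
      show LinearMap.mulLeft K _ p ∈ _
      rw [LinearMap.mulLeft_apply, Submodule.restrictScalars_mem]
      have h : d - k - 1 = (d - k - 2) + 1 := by omega
      have heq : (L i ^ (d - k - 1) * F i) * p = L i * (L i ^ (d - k - 2) * F i * p) := by
        rw [h, pow_succ, mul_comm (L i ^ (d - k - 2))]; simp [mul_assoc]
      rw [heq]
      exact Ideal.mul_mem_right _ _ (Ideal.subset_span ⟨i, rfl⟩)
  have hhom : (⨆ i, Wspace k d (L i) (F i)) ≤ homogeneousSubmodule (Fin (n+1)) K d := by
    apply iSup_le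
    intro i
    rw [Wspace]
    apply sup_le
    · intro x hx
      obtain ⟨p, hp, rfl⟩ := hx
      show LinearMap.mulLeft K _ p ∈ _
      rw [LinearMap.mulLeft_apply, mem_homogeneousSubmodule]
      have h1 : (L i).IsHomogeneous 1 := hL i
      have h2 := (h1.pow (d - k)).mul ((mem_homogeneousSubmodule _ _).mp hp)
      have he : 1 * (d - k) + k = d := by omega
      rwa [he] at h2
    · intro x hx
      obtain ⟨p, hp, rfl⟩ := hx
      show LinearMap.mulLeft K _ p ∈ _
      rw [LinearMap.mulLeft_apply, mem_homogeneousSubmodule]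
      have h1 : (L i).IsHomogeneous 1 := hL i
      have h2 := (((h1.pow (d - k - 1)).mul (hF i)).mul
        ((mem_homogeneousSubmodule _ _).mp hp))
      have he : 1 * (d - k - 1) + k + 1 = d := by omega
      rwa [he] at h2
  exact ⟨iSup_le hmem, main_bound n s d (by omega) hsn L (fun i => hL i) hLI _ hhom
    (iSup_le hmem)⟩
end

section
/- Let n = 2, k ≥ 1 and d = k+2. Then for ALL linear forms L_1, L_2 ∈ R_1 and all F_1, F_2 ∈ R_k in R = K[x_0,x_1,x_2], the sum W(L_1,F_1;k+2) + W(L_2,F_2;k+2) is a proper subspace of R_{k+2}. Since 2·(C(k+2,2)+2) ≥ C(k+4,2) for k ≥ 1 (so the expected dimension is all of R_{k+2}), the second secant variety of the k-th osculating variety of the (k+2)-uple Veronese surface is defective. -/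
open MvPolynomial

/-- a finsupp of degree 1 is `single i 1` for some `i`. -/
lemma degree_one_exists {σ : Type*} (d : σ →₀ ℕ) (h : d.degree = 1) :
    ∃ i, d = Finsupp.single i 1 := by
  have hd0 : d ≠ 0 := by
    intro h0
    rw [h0, map_zero] at h
    omega
  obtain ⟨i, hi⟩ := Finsupp.support_nonempty_iff.mpr hd0
  have hine : d i ≠ 0 := Finsupp.mem_support_iff.mp hi
  have h1 : d i ≤ 1 := h ▸ Finsupp.le_degree i d
  have hdi : d i = 1 := le_antisymm h1 (Nat.one_le_iff_ne_zero.mpr hine)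
  refine ⟨i, ?_⟩
  have hsplit : Finsupp.single i (d i) + d.erase i = d := Finsupp.single_add_erase i d
  have hadd : (Finsupp.single i (d i) + d.erase i).degree =
      (Finsupp.single i (d i)).degree + (d.erase i).degree := by
    simp [Finsupp.degree_eq_weight_one, map_add]
  rw [hsplit, h] at hadd
  have hs1 : (Finsupp.single i (d i)).degree = 1 := by
    rw [hdi]
    simp [Finsupp.degree_single]
  rw [hs1] at hadd
  have herase : (d.erase i).degree = 0 := by omega
  have he0 : d.erase i = 0 := (Finsupp.degree_eq_zero_iff _).mp herase
  rw [← hsplit, he0, add_zero, hdi]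

/-- a homogeneous polynomial of degree 1 is a linear combination of the variables -/
lemma linear_form_eq {K : Type*} [Field K] {n : ℕ} (L : MvPolynomial (Fin n) K)
    (hL : L ∈ homogeneousSubmodule (Fin n) K 1) :
    L = ∑ i : Fin n, C (coeff (Finsupp.single i 1) L) * X i := by
  rw [mem_homogeneousSubmodule] at hL
  ext d
  rw [coeff_sum]
  simp only [coeff_C_mul, coeff_X']
  by_cases hd : d.degree = 1
  · obtain ⟨j, rfl⟩ := degree_one_exists d hd
    rw [Finset.sum_eq_single j]
    · simp
    · intro i _ hij
      have : Finsupp.single i 1 ≠ Finsupp.single j 1 := by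
        simp [Finsupp.single_eq_single_iff, hij]
      simp [this]
    · simp
  · rw [hL.coeff_eq_zero hd]
    symm
    apply Finset.sum_eq_zero
    intro i _
    have : Finsupp.single i 1 ≠ d := by
      intro he
      exact hd (by rw [← he]; simp [Finsupp.degree_single])
    simp [this]

/-- evaluation of a linear form -/
lemma aeval_linear_form {K : Type*} [Field K] {n : ℕ} (L : MvPolynomial (Fin n) K)
    (hL : L ∈ homogeneousSubmodule (Fin n) K 1) (p : Fin n → K) :
    aeval p L = ∑ i : Fin n, coeff (Finsupp.single i 1) L * p i := by
  conv_lhs => rw [linear_form_eq L hL]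
  simp

/-- two linear functionals on K³ have a common nonzero zero -/
lemma exists_common_zero {K : Type*} [Field K] (a b : Fin 3 → K) :
    ∃ p : Fin 3 → K, p ≠ 0 ∧ (∑ i, a i * p i) = 0 ∧ (∑ i, b i * p i) = 0 := by
  let fa : (Fin 3 → K) →ₗ[K] K := ∑ i : Fin 3, a i • LinearMap.proj i
  let fb : (Fin 3 → K) →ₗ[K] K := ∑ i : Fin 3, b i • LinearMap.proj i
  let f : (Fin 3 → K) →ₗ[K] K × K := fa.prod fb
  have hfa : ∀ p, fa p = ∑ i, a i * p i := by
    intro p; simp [fa, LinearMap.sum_apply]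
  have hfb : ∀ p, fb p = ∑ i, b i * p i := by
    intro p; simp [fb, LinearMap.sum_apply]
  have hker : LinearMap.ker f ≠ ⊥ := by
    intro hbot
    have hinj : Function.Injective f := LinearMap.ker_eq_bot.mp hbot
    have h3 := LinearMap.finrank_le_finrank_of_injective hinj
    rw [Module.finrank_fintype_fun_eq_card, Fintype.card_fin, Module.finrank_prod,
      Module.finrank_self] at h3
    omega
  obtain ⟨p, hp, hp0⟩ := Submodule.exists_mem_ne_zero_of_ne_bot hker
  have hfp : f p = 0 := LinearMap.mem_ker.mp hp
  have h1 : fa p = 0 := congrArg Prod.fst hfp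
  have h2 : fb p = 0 := congrArg Prod.snd hfp
  exact ⟨p, hp0, by rw [← hfa]; exact h1, by rw [← hfb]; exact h2⟩

lemma Wspace_le {K : Type*} [Field K] (k : ℕ) (L F : MvPolynomial (Fin 3) K)
    (hL : L ∈ homogeneousSubmodule (Fin 3) K 1)
    (hF : F ∈ homogeneousSubmodule (Fin 3) K k)
    (p : Fin 3 → K) (hLp : aeval p L = 0) :
    Wspace k (k + 2) L F ≤
      homogeneousSubmodule (Fin 3) K (k + 2) ⊓
        LinearMap.ker ((aeval p : MvPolynomial (Fin 3) K →ₐ[K] K).toLinearMap) := by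
  rw [Wspace, show k + 2 - k - 1 = 1 from by omega, show k + 2 - k = 2 from by omega, pow_one]
  rw [mem_homogeneousSubmodule] at hL hF
  apply sup_le
  · rintro w ⟨v, hv, rfl⟩
    simp only [SetLike.mem_coe, mem_homogeneousSubmodule] at hv
    refine Submodule.mem_inf.mpr ⟨?_, ?_⟩
    · rw [mem_homogeneousSubmodule]
      have h := (hL.pow 2).mul hv
      rw [show 1 * 2 + k = k + 2 from by ring] at h
      simpa [LinearMap.mulLeft_apply] using h
    · simp [LinearMap.mulLeft_apply, LinearMap.mem_ker]
      exact Or.inl hLp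
  · rintro w ⟨v, hv, rfl⟩
    simp only [SetLike.mem_coe, mem_homogeneousSubmodule] at hv
    refine Submodule.mem_inf.mpr ⟨?_, ?_⟩
    · rw [mem_homogeneousSubmodule]
      have h := (hL.mul hF).mul hv
      rw [show 1 + k + 1 = k + 2 from by ring, mul_assoc] at h
      simpa [LinearMap.mulLeft_apply] using h
    · simp [LinearMap.mulLeft_apply, LinearMap.mem_ker]
      exact Or.inl hLp

/-- for `n = 2`, `k ≥ 1`, `d = k+2`, for ALL linear forms `L₁, L₂` and all
`F₁, F₂ ∈ R_k` in three variables, `W(L₁,F₁;k+2) + W(L₂,F₂;k+2)` is a proper subspace of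
`R_{k+2}`: the second secant variety of the k-th osculating variety of the (k+2)-uple
Veronese surface is defective. -/
theorem stmt16 {K : Type*} [Field K] [CharZero K] (k : ℕ) (hk : 1 ≤ k)
    (L₁ L₂ F₁ F₂ : MvPolynomial (Fin 3) K)
    (hL₁ : L₁ ∈ homogeneousSubmodule (Fin 3) K 1)
    (hL₂ : L₂ ∈ homogeneousSubmodule (Fin 3) K 1)
    (hF₁ : F₁ ∈ homogeneousSubmodule (Fin 3) K k)
    (hF₂ : F₂ ∈ homogeneousSubmodule (Fin 3) K k) :
    Wspace k (k + 2) L₁ F₁ ⊔ Wspace k (k + 2) L₂ F₂ <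
      homogeneousSubmodule (Fin 3) K (k + 2) := by
  obtain ⟨p, hp0, ha, hb⟩ := exists_common_zero
    (fun i => coeff (Finsupp.single i 1) L₁) (fun i => coeff (Finsupp.single i 1) L₂)
  have hL₁p : aeval p L₁ = 0 := by rw [aeval_linear_form L₁ hL₁ p]; exact ha
  have hL₂p : aeval p L₂ = 0 := by rw [aeval_linear_form L₂ hL₂ p]; exact hb
  have hle : Wspace k (k + 2) L₁ F₁ ⊔ Wspace k (k + 2) L₂ F₂ ≤
      homogeneousSubmodule (Fin 3) K (k + 2) ⊓
        LinearMap.ker ((aeval p : MvPolynomial (Fin 3) K →ₐ[K] K).toLinearMap) :=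
    sup_le (Wspace_le k L₁ F₁ hL₁ hF₁ p hL₁p) (Wspace_le k L₂ F₂ hL₂ hF₂ p hL₂p)
  refine lt_of_le_of_lt hle (lt_of_le_of_ne inf_le_left ?_)
  intro heq
  obtain ⟨j, hj⟩ : ∃ j, p j ≠ 0 := by
    by_contra h
    push_neg at h
    exact hp0 (funext h)
  have hmem : (X j : MvPolynomial (Fin 3) K) ^ (k + 2) ∈
      homogeneousSubmodule (Fin 3) K (k + 2) := by
    rw [mem_homogeneousSubmodule]
    simpa using (isHomogeneous_X K j).pow (k + 2)
  have := heq ▸ hmem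
  have hker : aeval p ((X j : MvPolynomial (Fin 3) K) ^ (k + 2)) = 0 := this.2
  simp only [map_pow, aeval_X] at hker
  exact pow_ne_zero (k + 2) hj hker
end
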